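/- Let p,q ∈ ℕ with p, q ≥ 1, Σ ∈ S⁺ₙ, and let D be the differential at Σ of the map f_{q/p}(Σ) = Σ^{q/p}, characterized by ∑_{i=0}^{p-1} (Σ^{q/p})^{p-1-i} (DX) (Σ^{q/p})^{i} = ∑_{j=0}^{q-1} Σ^{q-1-j} X Σ^{j}. Then tr(Σ^{-q/p}·DX) = (q/p)·tr(Σ⁻¹X) for every symmetric X. Consequently f_{q/p} preserves the half-space condition tr(Σ⁻¹X) ≥ 0. -/
import Mathlib

open Matrix Classical

set_option maxHeartbeats 1000000

/-- Real power of a symmetric (Hermitian) real matrix via its spectral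
decomposition (junk value `0` otherwise). -/
noncomputable def matRpow {n : ℕ} (A : Matrix (Fin n) (Fin n) ℝ) (r : ℝ) :
    Matrix (Fin n) (Fin n) ℝ :=
  if h : A.IsHermitian then
    (h.eigenvectorUnitary : Matrix (Fin n) (Fin n) ℝ) *
      Matrix.diagonal (fun i => (h.eigenvalues i) ^ r) *
      (star (h.eigenvectorUnitary : Matrix (Fin n) (Fin n) ℝ))
  else 0

variable {n : ℕ} {S : Matrix (Fin n) (Fin n) ℝ}

lemma matRpow_def (h : S.IsHermitian) (r : ℝ) :
    matRpow S r = (h.eigenvectorUnitary : Matrix (Fin n) (Fin n) ℝ) *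
      Matrix.diagonal (fun i => (h.eigenvalues i) ^ r) *
      (star (h.eigenvectorUnitary : Matrix (Fin n) (Fin n) ℝ)) := by
  rw [matRpow, dif_pos h]

lemma matRpow_add (hS : S.PosDef) (a b : ℝ) :
    matRpow S a * matRpow S b = matRpow S (a + b) := by
  have h := hS.1
  rw [matRpow_def h, matRpow_def h, matRpow_def h]
  set U : Matrix (Fin n) (Fin n) ℝ := (h.eigenvectorUnitary : Matrix (Fin n) (Fin n) ℝ)
  have hU : star U * U = 1 := Unitary.coe_star_mul_self _
  have hfun : (fun i => (h.eigenvalues i) ^ a * (h.eigenvalues i) ^ b)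
      = fun i => (h.eigenvalues i) ^ (a + b) := by
    funext i
    exact (Real.rpow_add (hS.eigenvalues_pos i) a b).symm
  calc U * Matrix.diagonal (fun i => (h.eigenvalues i) ^ a) * star U *
      (U * Matrix.diagonal (fun i => (h.eigenvalues i) ^ b) * star U)
      = U * (Matrix.diagonal (fun i => (h.eigenvalues i) ^ a) *
        ((star U * U) * (Matrix.diagonal (fun i => (h.eigenvalues i) ^ b) * star U))) := by
        simp only [Matrix.mul_assoc]
    _ = U * Matrix.diagonal (fun i => (h.eigenvalues i) ^ (a + b)) * star U := by
        rw [hU, Matrix.one_mul]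
        simp only [← Matrix.mul_assoc]
        rw [Matrix.mul_assoc U, Matrix.diagonal_mul_diagonal, hfun]

lemma matRpow_one (hS : S.PosDef) : matRpow S 1 = S := by
  have h := hS.1
  rw [matRpow_def h]
  conv_rhs => rw [h.spectral_theorem]
  congr 2
  funext i
  simp [Real.rpow_one, Function.comp]

lemma matRpow_natCast (hS : S.PosDef) (k : ℕ) : matRpow S (k : ℝ) = S ^ k := by
  induction k with
  | zero =>
    have h := hS.1
    rw [matRpow_def h]
    simp only [Nat.cast_zero, Real.rpow_zero]
    rw [Matrix.diagonal_one, Matrix.mul_one, pow_zero]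
    exact Unitary.coe_mul_star_self _
  | succ k ih =>
    have h2 : matRpow S (k : ℝ) * matRpow S 1 = matRpow S ((k : ℝ) + 1) :=
      matRpow_add hS _ _
    rw [matRpow_one hS] at h2
    rw [pow_succ, ← ih, h2]
    congr 1
    push_cast
    ring

lemma matRpow_neg_one (hS : S.PosDef) : matRpow S (-1) = S⁻¹ := by
  symm
  apply Matrix.inv_eq_left_inv
  have h2 : matRpow S (-1) * matRpow S 1 = matRpow S (-1 + 1) := matRpow_add hS _ _
  rw [matRpow_one hS] at h2
  rw [h2]
  norm_num
  have h0 := matRpow_natCast hS 0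
  simpa using h0

/-- If `D` is the differential at S of `f_{q/p}(S) = S^{q/p}`,
characterized by `∑_{i=0}^{p-1} (S^{q/p})^{p-1-i} (DX) (S^{q/p})^{i}
= ∑_{j=0}^{q-1} S^{q-1-j} X S^{j}`, then
`tr(S^{-q/p}·DX) = (q/p)·tr(S⁻¹X)` for every symmetric X; consequently
`f_{q/p}` preserves the half-space condition `tr(S⁻¹X) ≥ 0`. -/
theorem stmt14 (n : ℕ) (p q : ℕ) (hp : 1 ≤ p) (hq : 1 ≤ q)
    (S : Matrix (Fin n) (Fin n) ℝ) (hS : S.PosDef)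
    (D : Matrix (Fin n) (Fin n) ℝ → Matrix (Fin n) (Fin n) ℝ)
    (hD : ∀ X : Matrix (Fin n) (Fin n) ℝ, X.IsSymm →
      ∑ i ∈ Finset.range p,
        (matRpow S ((q : ℝ) / p)) ^ (p - 1 - i) * D X *
          (matRpow S ((q : ℝ) / p)) ^ i =
      ∑ j ∈ Finset.range q, S ^ (q - 1 - j) * X * S ^ j) :
    ∀ X : Matrix (Fin n) (Fin n) ℝ, X.IsSymm →
      (matRpow S (-((q : ℝ) / p)) * D X).trace = ((q : ℝ) / p) * (S⁻¹ * X).trace ∧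
      (0 ≤ (S⁻¹ * X).trace → 0 ≤ (matRpow S (-((q : ℝ) / p)) * D X).trace) := by
  intro X hX
  have hp0 : (p : ℝ) ≠ 0 := Nat.cast_ne_zero.mpr (by omega)
  set c : ℝ := (q : ℝ) / p with hc
  have hcp : c * p = q := div_mul_cancel₀ _ hp0
  -- powers of matRpow S c
  have hTpow : ∀ k : ℕ, (matRpow S c) ^ k = matRpow S (c * k) := by
    intro k
    induction k with
    | zero =>
      have h0 := matRpow_natCast hS 0
      simp only [Nat.cast_zero, pow_zero] at h0 ⊢
      rw [mul_zero, h0]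
    | succ k ih =>
      rw [pow_succ, ih, matRpow_add hS]
      congr 1
      push_cast
      ring
  -- key trace identity
  have key : ((matRpow S (-(q : ℝ))) * (∑ i ∈ Finset.range p,
        (matRpow S c) ^ (p - 1 - i) * D X * (matRpow S c) ^ i)).trace
      = ((matRpow S (-(q : ℝ))) * (∑ j ∈ Finset.range q,
        S ^ (q - 1 - j) * X * S ^ j)).trace := by
    rw [hD X hX]
  rw [Finset.mul_sum, Finset.mul_sum, Matrix.trace_sum, Matrix.trace_sum] at key
  have lhs_term : ∀ i ∈ Finset.range p,
      ((matRpow S (-(q : ℝ))) * ((matRpow S c) ^ (p - 1 - i) * D X * (matRpow S c) ^ i)).trace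
      = (matRpow S (-c) * D X).trace := by
    intro i hi
    rw [Finset.mem_range] at hi
    rw [hTpow, hTpow]
    have hcast : ((p - 1 - i : ℕ) : ℝ) = (p : ℝ) - 1 - i := by
      have : p - 1 - i = p - (1 + i) := by omega
      rw [this, Nat.cast_sub (by omega)]
      push_cast; ring
    rw [← Matrix.mul_assoc, ← Matrix.mul_assoc, matRpow_add hS,
      Matrix.trace_mul_cycle, matRpow_add hS]
    congr 3
    rw [hcast, hc]
    field_simp
    ring
  have rhs_term : ∀ j ∈ Finset.range q,
      ((matRpow S (-(q : ℝ))) * (S ^ (q - 1 - j) * X * S ^ j)).trace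
      = (S⁻¹ * X).trace := by
    intro j hj
    rw [Finset.mem_range] at hj
    rw [← matRpow_natCast hS, ← matRpow_natCast hS]
    have hcast : ((q - 1 - j : ℕ) : ℝ) = (q : ℝ) - 1 - j := by
      have : q - 1 - j = q - (1 + j) := by omega
      rw [this, Nat.cast_sub (by omega)]
      push_cast; ring
    rw [← Matrix.mul_assoc, ← Matrix.mul_assoc, matRpow_add hS,
      Matrix.trace_mul_cycle, matRpow_add hS, ← matRpow_neg_one hS]
    congr 3
    rw [hcast]
    ring
  rw [Finset.sum_congr rfl lhs_term, Finset.sum_congr rfl rhs_term,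
    Finset.sum_const, Finset.sum_const, Finset.card_range, Finset.card_range,
    nsmul_eq_mul, nsmul_eq_mul] at key
  have hmain : (matRpow S (-c) * D X).trace = c * (S⁻¹ * X).trace := by
    rw [hc, div_mul_eq_mul_div, eq_div_iff hp0]
    linear_combination key
  refine ⟨hmain, fun h0 => ?_⟩
  rw [hmain]
  have hcnn : 0 ≤ c := div_nonneg (Nat.cast_nonneg q) (Nat.cast_nonneg p)
  exact mul_nonneg hcnn h0
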